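/- At least max(⌈d(p)/2⌉, ⌈b(p)/4⌉) block moves are needed to sort a permutation p, where d(p) is the number of descents and b(p) the number of bad pairs of p. -/

import Mathlib

/-- Number of descents of a list (one-line notation). -/
def desNum (p : List ℕ) : ℕ :=
  ((Finset.range (p.length - 1)).filter (fun i => p.getD (i+1) 0 < p.getD i 0)).card

/-- The extension of `p` by a leading `0` and trailing `n+1`. -/
def extList (p : List ℕ) : List ℕ := 0 :: (p ++ [p.length + 1])

/-- Number of bad pairs of `p`. -/
def badNum (p : List ℕ) : ℕ :=
  ((Finset.range (p.length + 1)).filter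
    (fun i => (extList p).getD i 0 + 1 ≠ (extList p).getD (i+1) 0)).card

/-- `q` is obtained from `p` by one block move: interchanging two disjoint
nonempty blocks of consecutive entries. -/
def IsBlockMove (p q : List ℕ) : Prop :=
  ∃ A X B Y C : List ℕ, X ≠ [] ∧ Y ≠ [] ∧
    p = A ++ X ++ B ++ Y ++ C ∧ q = A ++ Y ++ B ++ X ++ C

/-- `p` is a permutation of `{1,…,n}` in one-line notation. -/
def IsPermList (p : List ℕ) : Prop := p.Perm (List.range' 1 p.length)

/-- `p` can be sorted to the identity `1 2 … n` using at most `k` block moves. -/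
def SortableIn (p : List ℕ) (k : ℕ) : Prop :=
  ∃ m ≤ k, ∃ f : ℕ → List ℕ, f 0 = p ∧ f m = List.range' 1 p.length ∧
    ∀ i < m, IsBlockMove (f i) (f (i+1))

/- ------------------------------------------------------------------ -/
/- Auxiliary machinery                                                 -/
/- ------------------------------------------------------------------ -/

/-- Sum of `f` over adjacent pairs of a list. -/
def cc (f : ℕ → ℕ → ℕ) : List ℕ → ℕ
  | a :: b :: t => f a b + cc f (b :: t)
  | _ => 0

/-- Descent indicator. -/
def jd (a b : ℕ) : ℕ := if b < a then 1 else 0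

/-- Bad-pair indicator. -/
def jb (a b : ℕ) : ℕ := if a + 1 ≠ b then 1 else 0

lemma cc_cons2 (f : ℕ → ℕ → ℕ) (a b : ℕ) (t : List ℕ) :
    cc f (a :: b :: t) = f a b + cc f (b :: t) := rfl

lemma lst_cons2 (a b : ℕ) (t : List ℕ) :
    (a :: b :: t).getLastD 0 = (b :: t).getLastD 0 := by simp

lemma headI_append (u v : List ℕ) (hu : u ≠ []) : (u ++ v).headI = u.headI := by
  cases u with
  | nil => simp at hu
  | cons a t => simp

lemma cc_glue (f : ℕ → ℕ → ℕ) :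
    ∀ (u v : List ℕ), u ≠ [] → v ≠ [] →
    cc f (u ++ v) = cc f u + f (u.getLastD 0) v.headI + cc f v
  | [], _, h, _ => absurd rfl h
  | [a], v, _, hv => by
      cases v with
      | nil => exact absurd rfl hv
      | cons b t => simp [cc_cons2, cc]
  | a :: b :: t, v, _, hv => by
      have ih := cc_glue f (b :: t) v (by simp) hv
      simp only [List.cons_append, cc_cons2] at *
      rw [ih, lst_cons2]
      omega

lemma cc_decomp4 (f : ℕ → ℕ → ℕ) (A X B Y C : List ℕ)
    (hA : A ≠ []) (hX : X ≠ []) (hB : B ≠ []) (hY : Y ≠ []) (hC : C ≠ []) :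
    cc f (A ++ X ++ B ++ Y ++ C) =
      cc f A + cc f X + cc f B + cc f Y + cc f C
      + f (A.getLastD 0) X.headI + f (X.getLastD 0) B.headI
      + f (B.getLastD 0) Y.headI + f (Y.getLastD 0) C.headI := by
  have e : A ++ X ++ B ++ Y ++ C = A ++ (X ++ (B ++ (Y ++ C))) := by
    simp [List.append_assoc]
  rw [e, cc_glue f A _ hA (by simp [hX]),
    cc_glue f X _ hX (by simp [hB]),
    cc_glue f B _ hB (by simp [hY]),
    cc_glue f Y _ hY hC,
    headI_append X _ hX, headI_append B _ hB, headI_append Y _ hY]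
  omega

lemma cc_decomp3 (f : ℕ → ℕ → ℕ) (A X Y C : List ℕ)
    (hA : A ≠ []) (hX : X ≠ []) (hY : Y ≠ []) (hC : C ≠ []) :
    cc f (A ++ X ++ Y ++ C) =
      cc f A + cc f X + cc f Y + cc f C
      + f (A.getLastD 0) X.headI + f (X.getLastD 0) Y.headI
      + f (Y.getLastD 0) C.headI := by
  have e : A ++ X ++ Y ++ C = A ++ (X ++ (Y ++ C)) := by
    simp [List.append_assoc]
  rw [e, cc_glue f A _ hA (by simp [hX]),
    cc_glue f X _ hX (by simp [hY]),
    cc_glue f Y _ hY hC,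
    headI_append X _ hX, headI_append Y _ hY]
  omega

/-- A block move (with nonempty outer parts) decreases the descent count by at most 2. -/
lemma dc_step (A X B Y C : List ℕ)
    (hA : A ≠ []) (hX : X ≠ []) (hY : Y ≠ []) (hC : C ≠ []) :
    cc jd (A ++ X ++ B ++ Y ++ C) ≤ cc jd (A ++ Y ++ B ++ X ++ C) + 2 := by
  rcases eq_or_ne B [] with rfl | hB
  · simp only [List.append_nil]
    rw [cc_decomp3 jd A X Y C hA hX hY hC, cc_decomp3 jd A Y X C hA hY hX hC]
    have : jd (A.getLastD 0) X.headI + jd (X.getLastD 0) Y.headI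
        + jd (Y.getLastD 0) C.headI
        ≤ jd (A.getLastD 0) Y.headI + jd (Y.getLastD 0) X.headI
        + jd (X.getLastD 0) C.headI + 2 := by
      unfold jd; split_ifs <;> omega
    omega
  · rw [cc_decomp4 jd A X B Y C hA hX hB hY hC,
      cc_decomp4 jd A Y B X C hA hY hB hX hC]
    have : jd (A.getLastD 0) X.headI + jd (X.getLastD 0) B.headI
        + jd (B.getLastD 0) Y.headI + jd (Y.getLastD 0) C.headI
        ≤ jd (A.getLastD 0) Y.headI + jd (Y.getLastD 0) B.headI
        + jd (B.getLastD 0) X.headI + jd (X.getLastD 0) C.headI + 2 := by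
      unfold jd; split_ifs <;> omega
    omega

/-- A block move (with nonempty outer parts) decreases the bad-pair count by at most 4. -/
lemma bc_step (A X B Y C : List ℕ)
    (hA : A ≠ []) (hX : X ≠ []) (hY : Y ≠ []) (hC : C ≠ []) :
    cc jb (A ++ X ++ B ++ Y ++ C) ≤ cc jb (A ++ Y ++ B ++ X ++ C) + 4 := by
  rcases eq_or_ne B [] with rfl | hB
  · simp only [List.append_nil]
    rw [cc_decomp3 jb A X Y C hA hX hY hC, cc_decomp3 jb A Y X C hA hY hX hC]
    have : jb (A.getLastD 0) X.headI + jb (X.getLastD 0) Y.headI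
        + jb (Y.getLastD 0) C.headI ≤ 4 := by
      unfold jb; split_ifs <;> omega
    omega
  · rw [cc_decomp4 jb A X B Y C hA hX hB hY hC,
      cc_decomp4 jb A Y B X C hA hY hB hX hC]
    have : jb (A.getLastD 0) X.headI + jb (X.getLastD 0) B.headI
        + jb (B.getLastD 0) Y.headI + jb (Y.getLastD 0) C.headI ≤ 4 := by
      unfold jb; split_ifs <;> omega
    omega

lemma card_filter_cc (P : ℕ → ℕ → Prop) [DecidableRel P] :
    ∀ l : List ℕ,
      ((Finset.range (l.length - 1)).filter
        (fun i => P (l.getD i 0) (l.getD (i+1) 0))).card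
      = cc (fun a b => if P a b then 1 else 0) l
  | [] => by simp [cc]
  | [a] => by simp [cc]
  | a :: b :: t => by
      have ih := card_filter_cc P (b :: t)
      rw [Finset.card_filter] at *
      show (∑ i ∈ Finset.range (t.length + 1),
        if P ((a :: b :: t).getD i 0) ((a :: b :: t).getD (i+1) 0) then 1 else 0) = _
      rw [Finset.sum_range_succ']
      simp only [List.getD_cons_succ, List.getD_cons_zero] at *
      rw [show (b :: t).length - 1 = t.length from rfl] at ih
      rw [ih]
      show _ = (if P a b then 1 else 0) + cc _ (b :: t)
      omega

lemma cc_le_cons (f : ℕ → ℕ → ℕ) (x : ℕ) (l : List ℕ) : cc f l ≤ cc f (x :: l) := by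
  cases l with
  | nil => simp [cc]
  | cons a t => show cc f (a :: t) ≤ f x a + cc f (a :: t); omega

lemma cc_le_concat (f : ℕ → ℕ → ℕ) : ∀ (l : List ℕ) (x : ℕ), cc f l ≤ cc f (l ++ [x])
  | [], _ => Nat.zero_le _
  | [_], _ => Nat.zero_le _
  | a :: b :: t, x => by
      have := cc_le_concat f (b :: t) x
      show f a b + cc f (b :: t) ≤ f a b + cc f ((b :: t) ++ [x])
      omega

lemma cc_range' (f : ℕ → ℕ → ℕ) (hf : ∀ a, f a (a+1) = 0) :
    ∀ (m s : ℕ), cc f (List.range' s m) = 0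
  | 0, _ => rfl
  | 1, _ => rfl
  | (m+2), s => by
      rw [List.range'_succ]
      have h2 : List.range' (s+1) (m+1) = (s+1) :: List.range' (s+2) m := by
        rw [List.range'_succ]
      rw [h2]
      show f s (s+1) + cc f ((s+1) :: List.range' (s+2) m) = 0
      rw [hf, ← h2, cc_range' f hf (m+1) (s+1)]

lemma ext_id (n : ℕ) : (0 :: (List.range' 1 n ++ [n + 1])) = List.range' 0 (n + 2) := by
  have h1 : List.range' 0 (n+2) = 0 :: List.range' 1 (n+1) := by rw [List.range'_succ]
  have h2 : List.range' 1 (n+1) = List.range' 1 n ++ [1 + 1 * n] := List.range'_concat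
  rw [h1, h2]
  simp [Nat.add_comm]

lemma desNum_eq_cc (p : List ℕ) : desNum p = cc jd p := by
  have := card_filter_cc (fun a b => b < a) p
  exact this

lemma badNum_eq_cc (p : List ℕ) : badNum p = cc jb (extList p) := by
  have h := card_filter_cc (fun a b => a + 1 ≠ b) (extList p)
  have hl : (extList p).length - 1 = p.length + 1 := by simp [extList]
  rw [hl] at h
  exact h

lemma dc_move {p q : List ℕ} (h : IsBlockMove p q) (L : ℕ) :
    cc jd (0 :: (p ++ [L])) ≤ cc jd (0 :: (q ++ [L])) + 2 := by
  obtain ⟨A, X, B, Y, C, hX, hY, rfl, rfl⟩ := h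
  have e1 : (0 :: ((A ++ X ++ B ++ Y ++ C) ++ [L]))
      = (0 :: A) ++ X ++ B ++ Y ++ (C ++ [L]) := by simp
  have e2 : (0 :: ((A ++ Y ++ B ++ X ++ C) ++ [L]))
      = (0 :: A) ++ Y ++ B ++ X ++ (C ++ [L]) := by simp
  rw [e1, e2]
  exact dc_step (0 :: A) X B Y (C ++ [L]) (by simp) hX hY (by simp)

lemma bc_move {p q : List ℕ} (h : IsBlockMove p q) (L : ℕ) :
    cc jb (0 :: (p ++ [L])) ≤ cc jb (0 :: (q ++ [L])) + 4 := by
  obtain ⟨A, X, B, Y, C, hX, hY, rfl, rfl⟩ := h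
  have e1 : (0 :: ((A ++ X ++ B ++ Y ++ C) ++ [L]))
      = (0 :: A) ++ X ++ B ++ Y ++ (C ++ [L]) := by simp
  have e2 : (0 :: ((A ++ Y ++ B ++ X ++ C) ++ [L]))
      = (0 :: A) ++ Y ++ B ++ X ++ (C ++ [L]) := by simp
  rw [e1, e2]
  exact bc_step (0 :: A) X B Y (C ++ [L]) (by simp) hX hY (by simp)

/-- At least `max(⌈d(p)/2⌉, ⌈b(p)/4⌉)` block moves are needed to sort `p`. -/
theorem max_lower_bound (p : List ℕ) (hp : IsPermList p) (k : ℕ)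
    (h : SortableIn p k) :
    max ((desNum p + 1) / 2) ((badNum p + 3) / 4) ≤ k := by
  obtain ⟨m, hmk, f, hf0, hfm, hstep⟩ := h
  set n := p.length with hn
  have key : ∀ j, j ≤ m →
      cc jd (0 :: (f (m - j) ++ [n + 1])) ≤ 2 * j ∧
      cc jb (0 :: (f (m - j) ++ [n + 1])) ≤ 4 * j := by
    intro j
    induction j with
    | zero =>
        intro _
        simp only [Nat.sub_zero, hfm]
        rw [ext_id n]
        constructor
        · rw [cc_range' jd (by intro a; simp [jd]) (n+2) 0]
        · rw [cc_range' jb (by intro a; simp [jb]) (n+2) 0]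
    | succ j ih =>
        intro hj
        have hj' : j ≤ m := by omega
        have ihj := ih hj'
        have hlt : m - (j+1) < m := by omega
        have hmove := hstep (m - (j+1)) hlt
        have heq : m - (j+1) + 1 = m - j := by omega
        rw [heq] at hmove
        constructor
        · have := dc_move hmove (n+1)
          omega
        · have := bc_move hmove (n+1)
          omega
  have hkey := key m le_rfl
  rw [Nat.sub_self, hf0] at hkey
  have hd : desNum p ≤ 2 * m := by
    have h1 : desNum p ≤ cc jd (p ++ [n+1]) := by
      rw [desNum_eq_cc]; exact cc_le_concat jd p (n+1)
    have h2 : cc jd (p ++ [n+1]) ≤ cc jd (0 :: (p ++ [n+1])) := cc_le_cons jd 0 _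
    omega
  have hb : badNum p ≤ 4 * m := by
    have : badNum p = cc jb (0 :: (p ++ [n+1])) := badNum_eq_cc p
    omega
  apply max_le <;> omega
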